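/- The Adler–Yamilov map admits the Lax representation L(u;a,λ)·L(v;b,λ) = L(y;b,λ)·L(x;a,λ): for all a, b, λ ∈ ℂ and all x = (x1,x2), y = (y1,y2) ∈ ℂ² with 1 + x1·y2 ≠ 0, setting (u,v) = Y_{a,b}(x,y), the 2×2 matrix identity L(u;a,λ)·L(v;b,λ) = L(y;b,λ)·L(x;a,λ) holds. -/

import Mathlib

/-- First component `u` of the Adler–Yamilov map. -/
noncomputable def ayU (a b : ℂ) (x y : ℂ × ℂ) : ℂ × ℂ :=
  (y.1 - ((a - b) / (1 + x.1 * y.2)) * x.1, y.2)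

/-- Second component `v` of the Adler–Yamilov map. -/
noncomputable def ayV (a b : ℂ) (x y : ℂ × ℂ) : ℂ × ℂ :=
  (x.1, x.2 + ((a - b) / (1 + x.1 * y.2)) * y.2)

/-- The NLS Lax matrix `L(x;a,λ) = [[λ + a + x1·x2, x1],[x2, 1]]`. -/
noncomputable def nlsLax (x : ℂ × ℂ) (a lam : ℂ) : Matrix (Fin 2) (Fin 2) ℂ :=
  !![lam + a + x.1 * x.2, x.1; x.2, 1]

/-- The Adler–Yamilov map admits the Lax representation
`L(u;a,λ)·L(v;b,λ) = L(y;b,λ)·L(x;a,λ)`. -/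
theorem adler_yamilov_lax_representation (a b lam : ℂ) (x y : ℂ × ℂ)
    (h : 1 + x.1 * y.2 ≠ 0) :
    nlsLax (ayU a b x y) a lam * nlsLax (ayV a b x y) b lam =
      nlsLax y b lam * nlsLax x a lam := by
  have h' : 1 + y.2 * x.1 ≠ 0 := by rwa [mul_comm]
  simp only [nlsLax, ayU, ayV]
  ext i j
  fin_cases i <;> fin_cases j <;>
    simp [Matrix.mul_apply, Fin.sum_univ_succ] <;>
    field_simp <;> ring
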